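/- For all ordinals α, β < ε₀ and every natural number n, if α <_n β then H_α(n) ≤ H_β(n), where <_n is the transitive closure of the relation {(α,β) : α = β[n]}. -/

import Mathlib

open ONote in
/-- `α` is a successor ordinal notation (its Cantor normal form ends with `ω^0·m`). -/
def ONote.isSucc : ONote → Prop
  | ONote.zero => False
  | ONote.oadd e _ ONote.zero => e = 0
  | ONote.oadd _ _ (ONote.oadd e n a) => ONote.isSucc (ONote.oadd e n a)

instance : DecidablePred ONote.isSucc := by
  intro a
  induction a with
  | zero => exact .isFalse (by simp [ONote.isSucc])
  | oadd e n a ihe iha =>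
    cases a with
    | zero => exact decidable_of_iff (e = 0) Iff.rfl
    | oadd e' n' a' => exact iha

/-- The standard fundamental sequence assignment `α[x]` on Cantor normal forms:
`0[x] = 0`, `(α+1)[x] = α`, and for `λ` with last term `ω^(β+1)` one has
`λ[x] = (λ - ω^(β+1)) + ω^β·x`, while for last term `ω^γ` (`γ` limit),
`λ[x] = (λ - ω^γ) + ω^(γ[x])`. -/
def ONote.fseq : ONote → ℕ → ONote
  | ONote.zero, _ => ONote.zero
  | ONote.oadd e m (ONote.oadd e' m' a'), x =>
      ONote.oadd e m (ONote.fseq (ONote.oadd e' m' a') x)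
  | ONote.oadd ONote.zero m ONote.zero, _ =>
      if _h : m = 1 then ONote.zero else ONote.oadd ONote.zero (m - 1) ONote.zero
  | ONote.oadd (ONote.oadd e1 m1 a1) m ONote.zero, x =>
      let e := ONote.oadd e1 m1 a1
      let tail : ONote → ONote :=
        fun t => if m = 1 then t else ONote.oadd e (m - 1) t
      if ONote.isSucc e then
        match x with
        | 0 => tail ONote.zero
        | Nat.succ y => tail (ONote.oadd (ONote.fseq e (y+1)) (Nat.succPNat y) ONote.zero)
      else tail (ONote.oadd (ONote.fseq e x) 1 ONote.zero)

/-- `α <_n β` : transitive closure of `α = β[n]`. -/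
def ONote.stepLt (n : ℕ) (a b : ONote) : Prop :=
  Relation.TransGen (fun x y => x = ONote.fseq y n) a b

/-- `α ≤_n β`. -/
def ONote.stepLe (n : ℕ) (a b : ONote) : Prop :=
  ONote.stepLt n a b ∨ a = b

namespace ONote
theorem fseq_zero' (x) : fseq zero x = zero := rfl
theorem fseq_tail (e m e' m' a' x) :
    fseq (oadd e m (oadd e' m' a')) x = oadd e m (fseq (oadd e' m' a') x) := by simp [fseq]
theorem fseq_nat (m x) : fseq (oadd zero m zero) x = if m = 1 then zero else oadd zero (m-1) zero := by
  simp [fseq]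
theorem fseq_s0 (e1 m1 a1 m) (h : isSucc (oadd e1 m1 a1)) :
    fseq (oadd (oadd e1 m1 a1) m zero) 0 =
    if m = 1 then zero else oadd (oadd e1 m1 a1) (m-1) zero := by
  simp [fseq, h]
theorem fseq_ss (e1 m1 a1 m y) (h : isSucc (oadd e1 m1 a1)) :
    fseq (oadd (oadd e1 m1 a1) m zero) (y+1) =
    (if m = 1 then (oadd (fseq (oadd e1 m1 a1) (y+1)) (Nat.succPNat y) zero)
     else oadd (oadd e1 m1 a1) (m-1) (oadd (fseq (oadd e1 m1 a1) (y+1)) (Nat.succPNat y) zero)) := by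
  simp [fseq, h]
theorem fseq_lim (e1 m1 a1 m x) (h : ¬ isSucc (oadd e1 m1 a1)) :
    fseq (oadd (oadd e1 m1 a1) m zero) x =
    (if m = 1 then (oadd (fseq (oadd e1 m1 a1) x) 1 zero)
     else oadd (oadd e1 m1 a1) (m-1) (oadd (fseq (oadd e1 m1 a1) x) 1 zero)) := by
  simp [fseq, h]

theorem oadd_ne_zero' {e m a} : oadd e m a ≠ 0 := fun h => by cases h

theorem nfo {e : ONote} (h : NF e) (n : ℕ+) : NF (oadd e n zero) := @NF.oadd_zero e n h

theorem pnat_sub_lt {m : ℕ+} (hm : m ≠ 1) : ((m - 1 : ℕ+) : ℕ) < (m : ℕ) := by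
  have h1 : (1 : ℕ+) < m := lt_of_le_of_ne m.one_le (Ne.symm hm)
  have h2 : 1 < (m : ℕ) := by exact_mod_cast h1
  rw [PNat.sub_coe, if_pos h1, PNat.one_coe]
  omega

/-- fseq of a successor doesn't depend on the argument. -/
theorem fseq_congr : ∀ (a : ONote), isSucc a → ∀ x y, fseq a x = fseq a y
  | zero, h, _, _ => absurd h (by simp [isSucc])
  | oadd e m (oadd e' m' a'), h, x, y => by
      have h' : isSucc (oadd e' m' a') := by simpa [isSucc] using h
      rw [fseq_tail, fseq_tail, fseq_congr (oadd e' m' a') h' x y]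
  | oadd zero m zero, _, x, y => by rw [fseq_nat, fseq_nat]
  | oadd (oadd e1 m1 a1) m zero, h, x, y => by
      have : (oadd e1 m1 a1 : ONote) = 0 := by simpa [isSucc] using h
      exact absurd this oadd_ne_zero'

theorem fseq_nf_lt : ∀ (a : ONote), NF a → ∀ x, NF (fseq a x) ∧ (a ≠ 0 → fseq a x < a)
  | zero, _, x => ⟨NF.zero, fun h => absurd rfl h⟩
  | oadd e m (oadd e' m' a'), h, x => by
      obtain ⟨ihnf, ihlt⟩ := fseq_nf_lt (oadd e' m' a') h.snd x
      have hlt : fseq (oadd e' m' a') x < oadd e' m' a' := ihlt oadd_ne_zero'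
      rw [fseq_tail]
      constructor
      · exact NF.oadd h.fst m (NF.below_of_lt' (lt_trans (lt_def.1 hlt) h.snd'.repr_lt) ihnf)
      · exact fun _ => oadd_lt_oadd_3 hlt
  | oadd zero m zero, h, x => by
      rw [fseq_nat]
      by_cases hm : m = 1
      · rw [if_pos hm]
        exact ⟨NF.zero, fun _ => oadd_pos _ _ _⟩
      · rw [if_neg hm]
        exact ⟨nfo NF.zero _, fun _ => oadd_lt_oadd_2 (nfo NF.zero _) (pnat_sub_lt hm)⟩
  | oadd (oadd e1 m1 a1) m zero, h, x => by
      obtain ⟨ihnf, ihlt⟩ := fseq_nf_lt (oadd e1 m1 a1) h.fst x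
      have helt : fseq (oadd e1 m1 a1) x < oadd e1 m1 a1 := ihlt oadd_ne_zero'
      have hnfo : ∀ (j : ℕ+),
          NF (oadd (oadd e1 m1 a1) (m-1) (oadd (fseq (oadd e1 m1 a1) x) j zero)) :=
        fun j => NF.oadd h.fst _ (NFBelow.oadd ihnf NFBelow.zero (lt_def.1 helt))
      have hlt1 : ∀ (j : ℕ+),
          oadd (fseq (oadd e1 m1 a1) x) j zero < oadd (oadd e1 m1 a1) m zero :=
        fun j => oadd_lt_oadd_1 (nfo ihnf _) helt
      have hlt2 : ∀ (t : ONote), NF (oadd (oadd e1 m1 a1) (m-1) t) → m ≠ 1 →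
          oadd (oadd e1 m1 a1) (m-1) t < oadd (oadd e1 m1 a1) m zero :=
        fun t hnf hm => oadd_lt_oadd_2 hnf (pnat_sub_lt hm)
      by_cases hs : isSucc (oadd e1 m1 a1)
      · cases x with
        | zero =>
          rw [fseq_s0 _ _ _ _ hs]
          by_cases hm : m = 1
          · rw [if_pos hm]; exact ⟨NF.zero, fun _ => oadd_pos _ _ _⟩
          · rw [if_neg hm]
            exact ⟨nfo h.fst _, fun _ => hlt2 zero (nfo h.fst _) hm⟩
        | succ y =>
          rw [fseq_ss _ _ _ _ _ hs]
          by_cases hm : m = 1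
          · rw [if_pos hm]
            exact ⟨nfo ihnf _, fun _ => hlt1 _⟩
          · rw [if_neg hm]
            exact ⟨hnfo _, fun _ => hlt2 _ (hnfo _) hm⟩
      · rw [fseq_lim _ _ _ _ _ hs]
        by_cases hm : m = 1
        · rw [if_pos hm]
          exact ⟨nfo ihnf _, fun _ => hlt1 _⟩
        · rw [if_neg hm]
          exact ⟨hnfo _, fun _ => hlt2 _ (hnfo _) hm⟩

theorem fseq_nf {a : ONote} (h : NF a) (x : ℕ) : NF (fseq a x) := (fseq_nf_lt a h x).1
theorem fseq_lt {a : ONote} (h : NF a) (h0 : a ≠ 0) (x : ℕ) : fseq a x < a := (fseq_nf_lt a h x).2 h0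

theorem stepLe_trans {x : ℕ} {a b c : ONote} (h1 : stepLe x a b) (h2 : stepLe x b c) :
    stepLe x a c := by
  cases h1 with
  | inr h => exact h ▸ h2
  | inl h1 =>
    cases h2 with
    | inr h => exact h ▸ Or.inl h1
    | inl h2 => exact Or.inl (h1.trans h2)

theorem stepLe_tail' {x : ℕ} {a b c : ONote} (h : stepLe x a b) (e : b = fseq c x) :
    stepLt x a c := by
  cases h with
  | inr h => exact Relation.TransGen.single (h.trans e)
  | inl h => exact h.tail e

theorem stepLt_nf {x : ℕ} {a b : ONote} (h : stepLt x a b) : NF b → NF a := by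
  induction h with
  | single h => exact fun hb => h ▸ fseq_nf hb x
  | tail _ hbc ih => exact fun hc => ih (hbc ▸ fseq_nf hc x)

theorem stepLe_nf {x : ℕ} {a b : ONote} (h : stepLe x a b) (hb : NF b) : NF a := by
  cases h with
  | inr h => exact h ▸ hb
  | inl h => exact stepLt_nf h hb

theorem zero_stepLe (x : ℕ) (a : ONote) (ha : NF a) : stepLe x 0 a := by
  have H : ∀ o : Ordinal, ∀ a : ONote, repr a = o → NF a → stepLe x 0 a := by
    intro o
    induction o using Ordinal.induction with
    | h o IH =>
      intro a h0 ha
      subst h0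
      cases a with
      | zero => exact Or.inr rfl
      | oadd e m t =>
        have h1 := fseq_lt ha oadd_ne_zero' x
        have h2 := fseq_nf ha x
        exact Or.inl (stepLe_tail' (IH _ (lt_def.1 h1) _ rfl h2) rfl)
  exact H _ a rfl ha

theorem step_oadd {x : ℕ} {e : ONote} {m : ℕ+} {a b : ONote} (h : a = fseq b x) :
    stepLe x (oadd e m a) (oadd e m b) := by
  cases b with
  | zero => exact Or.inr (by rw [h]; rfl)
  | oadd e' m' a' => exact Or.inl (Relation.TransGen.single (by rw [h, fseq_tail]))

theorem stepLe_oadd {x : ℕ} {e : ONote} {m : ℕ+} {a b : ONote} (h : stepLe x a b) :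
    stepLe x (oadd e m a) (oadd e m b) := by
  cases h with
  | inr h => exact Or.inr (by rw [h])
  | inl h =>
    induction h with
    | single h => exact step_oadd h
    | tail _ hbc ih => exact stepLe_trans ih (step_oadd hbc)

theorem stepLt_coeff {x : ℕ} {c : ONote} (hc : NF c) {m : ℕ+} (hm : m ≠ 1) :
    stepLt x (oadd c (m-1) zero) (oadd c m zero) := by
  cases c with
  | zero => exact Relation.TransGen.single (by rw [fseq_nat, if_neg hm])
  | oadd e1 m1 a1 =>
    by_cases hs : isSucc (oadd e1 m1 a1)
    · cases x with
      | zero => exact Relation.TransGen.single (by rw [fseq_s0 _ _ _ _ hs, if_neg hm])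
      | succ y =>
        have ht : NF (oadd (fseq (oadd e1 m1 a1) (y+1)) (Nat.succPNat y) zero) :=
          nfo (fseq_nf hc _) _
        have h0 : stepLe (y+1) (oadd (oadd e1 m1 a1) (m-1) zero)
            (oadd (oadd e1 m1 a1) (m-1) (oadd (fseq (oadd e1 m1 a1) (y+1)) (Nat.succPNat y) zero)) :=
          stepLe_oadd (zero_stepLe _ _ ht)
        exact stepLe_tail' h0 (by rw [fseq_ss _ _ _ _ _ hs, if_neg hm])
    · have ht : NF (oadd (fseq (oadd e1 m1 a1) x) 1 zero) := nfo (fseq_nf hc _) _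
      have h0 : stepLe x (oadd (oadd e1 m1 a1) (m-1) zero)
          (oadd (oadd e1 m1 a1) (m-1) (oadd (fseq (oadd e1 m1 a1) x) 1 zero)) :=
        stepLe_oadd (zero_stepLe _ _ ht)
      exact stepLe_tail' h0 (by rw [fseq_lim _ _ _ _ _ hs, if_neg hm])

theorem stepLe_coeff {x : ℕ} {c : ONote} (hc : NF c) :
    ∀ (m k : ℕ+), k ≤ m → stepLe x (oadd c k zero) (oadd c m zero) := by
  intro m
  induction m using PNat.recOn with
  | one =>
    intro k hk
    rw [le_antisymm hk k.one_le]
    exact Or.inr rfl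
  | succ m ih =>
    intro k hk
    rcases eq_or_lt_of_le hk with rfl | h
    · exact Or.inr rfl
    · have hk' : k ≤ m := PNat.lt_add_one_iff.1 h
      have h1 : (m + 1 : ℕ+) ≠ 1 := by
        intro hcon
        have := congrArg (fun z : ℕ+ => (z : ℕ)) hcon
        simp at this
      have h2 : (m + 1 : ℕ+) - 1 = m := by
        apply PNat.coe_injective
        rw [PNat.sub_coe, if_pos]
        · simp
        · exact_mod_cast Nat.lt_succ_of_le m.one_le
      exact stepLe_trans (ih k hk') (Or.inl (by have := stepLt_coeff (x := x) hc h1; rwa [h2] at this))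

theorem step_opow {x : ℕ} (hx : x ≠ 0) {a b : ONote} (hb : NF b) (h : a = fseq b x) :
    stepLe x (oadd a 1 zero) (oadd b 1 zero) := by
  cases b with
  | zero => exact Or.inr (by rw [h]; rfl)
  | oadd e1 m1 a1 =>
    obtain ⟨y, rfl⟩ : ∃ y, x = y + 1 := ⟨x - 1, by omega⟩
    by_cases hs : isSucc (oadd e1 m1 a1)
    · have heq : fseq (oadd (oadd e1 m1 a1) 1 zero) (y+1)
          = oadd (fseq (oadd e1 m1 a1) (y+1)) (Nat.succPNat y) zero := by
        rw [fseq_ss _ _ _ _ _ hs, if_pos rfl]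
      have hle : stepLe (y+1) (oadd a 1 zero)
          (oadd (fseq (oadd e1 m1 a1) (y+1)) (Nat.succPNat y) zero) := by
        rw [h]
        exact stepLe_coeff (fseq_nf hb _) _ 1 (Nat.succPNat y).one_le
      exact Or.inl (stepLe_tail' hle heq.symm)
    · have heq : fseq (oadd (oadd e1 m1 a1) 1 zero) (y+1)
          = oadd (fseq (oadd e1 m1 a1) (y+1)) 1 zero := by
        rw [fseq_lim _ _ _ _ _ hs, if_pos rfl]
      exact Or.inl (Relation.TransGen.single (by rw [h, heq]))

theorem stepLe_opow {x : ℕ} (hx : x ≠ 0) {a b : ONote} (hb : NF b) (h : stepLe x a b) :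
    stepLe x (oadd a 1 zero) (oadd b 1 zero) := by
  cases h with
  | inr h => exact Or.inr (by rw [h])
  | inl h =>
    induction h with
    | single h => exact step_opow hx hb h
    | @tail b' b'' hab hbc ih =>
      exact stepLe_trans (ih (hbc ▸ fseq_nf hb x)) (step_opow hx hb hbc)

theorem stepLe_eq_zero {x : ℕ} {a b : ONote} (h : stepLe x a b) (hb : b = 0) : a = 0 := by
  cases h with
  | inr h => exact h.trans hb
  | inl h =>
    induction h with
    | single h => exact h.trans (by rw [hb]; rfl)
    | tail hab hbc ih => exact ih (hbc.trans (by rw [hb]; rfl))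

theorem bachmann : ∀ (b : ONote), NF b → ∀ n, stepLe (n+1) (fseq b n) (fseq b (n+1))
  | zero, _, n => Or.inr rfl
  | oadd e m (oadd e' m' a'), h, n => by
      rw [fseq_tail, fseq_tail]
      exact stepLe_oadd (bachmann _ h.snd n)
  | oadd zero m zero, h, n => by rw [fseq_nat, fseq_nat]; exact Or.inr rfl
  | oadd (oadd e1 m1 a1) m zero, h, n => by
      by_cases hs : isSucc (oadd e1 m1 a1)
      · cases n with
        | zero =>
          rw [fseq_s0 _ _ _ _ hs, fseq_ss _ _ _ _ 0 hs]
          have hnf1 : NF (oadd (fseq (oadd e1 m1 a1) (0+1)) (Nat.succPNat 0) zero) :=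
            nfo (fseq_nf h.fst _) _
          by_cases hm : m = 1
          · rw [if_pos hm, if_pos hm]
            exact zero_stepLe _ _ hnf1
          · rw [if_neg hm, if_neg hm]
            exact stepLe_oadd (zero_stepLe _ _ hnf1)
        | succ y =>
          rw [fseq_ss _ _ _ _ y hs, fseq_ss _ _ _ _ (y+1) hs,
            fseq_congr _ hs (y+1+1) (y+1)]
          have hkey : stepLe (y+1+1) (oadd (fseq (oadd e1 m1 a1) (y+1)) (Nat.succPNat y) zero)
              (oadd (fseq (oadd e1 m1 a1) (y+1)) (Nat.succPNat (y+1)) zero) :=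
            stepLe_coeff (fseq_nf h.fst _) _ _
              (by rw [← PNat.coe_le_coe, Nat.succPNat_coe, Nat.succPNat_coe]; omega)
          by_cases hm : m = 1
          · rw [if_pos hm, if_pos hm]
            exact hkey
          · rw [if_neg hm, if_neg hm]
            exact stepLe_oadd hkey
      · rw [fseq_lim _ _ _ _ n hs, fseq_lim _ _ _ _ (n+1) hs]
        have hkey : stepLe (n+1) (oadd (fseq (oadd e1 m1 a1) n) 1 zero)
            (oadd (fseq (oadd e1 m1 a1) (n+1)) 1 zero) :=
          stepLe_opow (Nat.succ_ne_zero n) (fseq_nf h.fst (n+1)) (bachmann _ h.fst n)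
        by_cases hm : m = 1
        · rw [if_pos hm, if_pos hm]
          exact hkey
        · rw [if_neg hm, if_neg hm]
          exact stepLe_oadd hkey

end ONote


/-- The graph of the Hardy hierarchy: `H_0(x) = x`, `H_{α+1}(x) = H_α(x+1)`,
`H_λ(x) = H_{λ[x]}(x)` for limit `λ`. -/
inductive HardyRel : ONote → ℕ → ℕ → Prop
  | zero (x : ℕ) : HardyRel ONote.zero x x
  | succ {a : ONote} {x y : ℕ} (h : a.isSucc) (hrec : HardyRel (a.fseq x) (x + 1) y) :
      HardyRel a x y
  | limit {a : ONote} {x y : ℕ} (h0 : a ≠ ONote.zero) (h : ¬ a.isSucc)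
      (hrec : HardyRel (a.fseq x) x y) : HardyRel a x y

open scoped Classical in
/-- The Hardy function `H_α : ℕ → ℕ` (for `α` in normal form the defining
recursion terminates, so `hardy` is the unique value of the graph `HardyRel`). -/
noncomputable def hardy (a : ONote) (x : ℕ) : ℕ :=
  if h : ∃ y, HardyRel a x y then h.choose else 0

theorem hardyRel_unique : ∀ {a : ONote} {x y : ℕ}, HardyRel a x y →
    ∀ {y' : ℕ}, HardyRel a x y' → y = y' := by
  intro a x y h
  induction h with
  | zero x =>
    intro y' h'
    cases h' with
    | zero => rfl
    | succ hs _ => exact absurd hs (by simp [ONote.isSucc])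
    | limit h0 _ _ => exact absurd rfl h0
  | succ hs hrec ih =>
    intro y' h'
    cases h' with
    | zero => exact absurd hs (by simp [ONote.isSucc])
    | succ hs' hrec' => exact ih hrec'
    | limit _ hns _ => exact absurd hs hns
  | limit h0 hns hrec ih =>
    intro y' h'
    cases h' with
    | zero => exact absurd rfl h0
    | succ hs' _ => exact absurd hs' hns
    | limit _ _ hrec' => exact ih hrec'

theorem hardyRel_total (a : ONote) (ha : a.NF) (x : ℕ) : ∃ y, HardyRel a x y := by
  have H : ∀ o : Ordinal, ∀ a : ONote, ONote.repr a = o → a.NF → ∀ x, ∃ y, HardyRel a x y := by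
    intro o
    induction o using Ordinal.induction with
    | h o IH =>
      intro a h0 ha x
      subst h0
      cases a with
      | zero => exact ⟨x, .zero x⟩
      | oadd e m t =>
        have h1 := ONote.fseq_lt ha ONote.oadd_ne_zero'
        have h2 := ONote.fseq_nf ha
        by_cases hs : ONote.isSucc (ONote.oadd e m t)
        · obtain ⟨y, hy⟩ := IH _ (ONote.lt_def.1 (h1 x)) _ rfl (h2 x) (x+1)
          exact ⟨y, .succ hs hy⟩
        · obtain ⟨y, hy⟩ := IH _ (ONote.lt_def.1 (h1 x)) _ rfl (h2 x) x
          exact ⟨y, .limit ONote.oadd_ne_zero' hs hy⟩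
  exact H _ a rfl ha x

theorem hardy_spec {a : ONote} {x : ℕ} (h : a.NF) : HardyRel a x (hardy a x) := by
  have he : ∃ y, HardyRel a x y := hardyRel_total a h x
  unfold hardy
  rw [dif_pos he]
  exact he.choose_spec

theorem hardy_eq {a : ONote} {x y : ℕ} (ha : a.NF) (h : HardyRel a x y) : hardy a x = y :=
  hardyRel_unique (hardy_spec ha) h

theorem hardy_zero (x : ℕ) : hardy ONote.zero x = x := hardy_eq ONote.NF.zero (.zero x)

theorem hardy_succ {a : ONote} {x : ℕ} (ha : a.NF) (hs : a.isSucc) :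
    hardy a x = hardy (a.fseq x) (x+1) :=
  hardy_eq ha (.succ hs (hardy_spec (ONote.fseq_nf ha x)))

theorem hardy_limit {a : ONote} {x : ℕ} (ha : a.NF) (h0 : a ≠ ONote.zero) (hs : ¬ a.isSucc) :
    hardy a x = hardy (a.fseq x) x :=
  hardy_eq ha (.limit h0 hs (hardy_spec (ONote.fseq_nf ha x)))

theorem hardy_mono : ∀ (o : Ordinal) (b : ONote), ONote.repr b = o → b.NF →
    (∀ n, hardy b n ≤ hardy b (n+1)) ∧
    (∀ n a, ONote.stepLe n a b → hardy a n ≤ hardy b n) := by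
  intro o
  induction o using Ordinal.induction with
  | h o IH =>
    intro b h0 hb
    subst h0
    have IH' : ∀ b' : ONote, b' < b → b'.NF →
        (∀ n, hardy b' n ≤ hardy b' (n+1)) ∧
        (∀ n a, ONote.stepLe n a b' → hardy a n ≤ hardy b' n) :=
      fun b' h hb' => IH _ (ONote.lt_def.1 h) b' rfl hb'
    have Bstep : ∀ n a, a = ONote.fseq b n → hardy a n ≤ hardy b n := by
      intro n a h
      cases b with
      | zero => rw [h]; exact le_of_eq rfl
      | oadd e m t =>
        by_cases hs : ONote.isSucc (ONote.oadd e m t)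
        · rw [hardy_succ hb hs, ← h]
          exact (IH' a (h ▸ ONote.fseq_lt hb ONote.oadd_ne_zero' n)
            (h ▸ ONote.fseq_nf hb n)).1 n
        · rw [hardy_limit hb ONote.oadd_ne_zero' hs, ← h]
    constructor
    · intro n
      cases b with
      | zero => rw [hardy_zero, hardy_zero]; omega
      | oadd e m t =>
        by_cases hs : ONote.isSucc (ONote.oadd e m t)
        · rw [hardy_succ hb hs (x := n), hardy_succ hb hs (x := n+1),
            ONote.fseq_congr _ hs (n+1) n]
          exact (IH' _ (ONote.fseq_lt hb ONote.oadd_ne_zero' n)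
            (ONote.fseq_nf hb n)).1 (n+1)
        · rw [hardy_limit hb ONote.oadd_ne_zero' hs (x := n),
            hardy_limit hb ONote.oadd_ne_zero' hs (x := n+1)]
          have h1 : hardy (ONote.fseq (ONote.oadd e m t) n) n ≤
              hardy (ONote.fseq (ONote.oadd e m t) n) (n+1) :=
            (IH' _ (ONote.fseq_lt hb ONote.oadd_ne_zero' n) (ONote.fseq_nf hb n)).1 n
          have h2 : hardy (ONote.fseq (ONote.oadd e m t) n) (n+1) ≤
              hardy (ONote.fseq (ONote.oadd e m t) (n+1)) (n+1) :=
            (IH' _ (ONote.fseq_lt hb ONote.oadd_ne_zero' (n+1))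
              (ONote.fseq_nf hb (n+1))).2 (n+1) _ (ONote.bachmann _ hb n)
          exact h1.trans h2
    · intro n a h
      cases h with
      | inr h => rw [h]
      | inl h =>
        cases b with
        | zero =>
          rw [ONote.stepLe_eq_zero (Or.inl h) rfl]
          exact le_of_eq rfl
        | oadd e m t =>
          cases h with
          | single h => exact Bstep n a h
          | tail hab hbc =>
            have hnf : ONote.NF _ := hbc ▸ ONote.fseq_nf hb n
            have hlt : _ < ONote.oadd e m t := hbc ▸ ONote.fseq_lt hb ONote.oadd_ne_zero' n
            exact ((IH' _ hlt hnf).2 n a (Or.inl hab)).trans (Bstep n _ hbc)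

/-- if `α <_n β` then `H_α(n) ≤ H_β(n)`. -/
theorem hardy_le_of_stepLt (a b : ONote) (ha : a.NF) (hb : b.NF) (n : ℕ)
    (h : ONote.stepLt n a b) : hardy a n ≤ hardy b n :=
  (hardy_mono _ b rfl hb).2 n a (Or.inl h)
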